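/- Let 𝒜 = (Q, A, τ) be a Mealy automaton with A finite and S the semigroup it generates. Let v₁, v₂ ∈ A* and suppose there exists a bijection φ : S·v₁ → S·v₂ such that φ(v₁) = v₂ and ψ_{v₁}^φ = ψ_{v₂}. Then m_{v₁⌢w} = m_{v₂⌢w} for all w ∈ A*. -/

import Mathlib

/-!
Framework for Mealy automata `𝒜 = (Q, A, τ)` with `τ q a = (q·a, q@a)`.

* `Mealy.act τ q` is the endomorphism of the free monoid `A*` (modelled as `List A`)
  induced by the state `q`, defined by `q·(a⌢u) = (q·a)⌢((q@a)·u)`.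
* `Mealy.Sgp τ` is the semigroup (with identity adjoined, i.e. the submonoid) of
  `End(A*)` generated by the states.
* `Mealy.extω f ξ` is the extension of a length- and prefix-preserving endomorphism
  `f` of `A*` to right-infinite words `ξ : ℕ → A`: its `n`-th letter is the `n`-th
  letter of the image of the length-`(n+1)` prefix of `ξ`.
* `Mealy.catω v ξ` is the concatenation `v⌢ξ` of a finite word with an infinite word.
* `Mealy.orbit τ u` and `Mealy.orbitω τ ξ` are the orbits `S·u` and `S·ξ`.
* `Mealy.mval τ v` is `m_v = sup_{ξ ∈ A^ω} |S·(v⌢ξ)| ∈ ℕ∞`.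
* `Mealy.sect f w` is the section `f@w`, characterized for `f ∈ S` by
  `f·(w⌢u) = (f·w)⌢((f@w)·u)`.
-/

namespace Mealy

variable {Q A : Type*}

/-- The action of a state on a finite word: `q·(a⌢u) = (q·a)⌢((q@a)·u)`. -/
def act (τ : Q → A → A × Q) : Q → List A → List A
  | _, [] => []
  | q, a :: u => (τ q a).1 :: act τ (τ q a).2 u

/-- The semigroup `S ≤ End(A*)` generated by the states of the automaton
(as a submonoid of `Function.End (List A)`, where multiplication is composition). -/
def Sgp (τ : Q → A → A × Q) : Submonoid (Function.End (List A)) :=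
  Submonoid.closure { f : Function.End (List A) | ∃ q : Q, f = act τ q }

/-- Extension of a (length- and prefix-preserving) endomorphism of `A*` to `A^ω`:
the `n`-th letter of `f·ξ` is the `n`-th letter of the image of the prefix of `ξ`
of length `n+1`. -/
def extω (f : Function.End (List A)) (ξ : ℕ → A) : ℕ → A :=
  fun n => (f ((List.range (n + 1)).map ξ)).getD n (ξ n)

/-- Concatenation `v⌢ξ` of a finite word with a right-infinite word. -/
def catω (v : List A) (ξ : ℕ → A) : ℕ → A :=
  fun n => v.getD n (ξ (n - v.length))

/-- The orbit `S·u` of a finite word. -/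
def orbit (τ : Q → A → A × Q) (u : List A) : Set (List A) :=
  (fun f : Function.End (List A) => f u) '' (Sgp τ : Set (Function.End (List A)))

/-- The orbit `S·ξ` of a right-infinite word. -/
def orbitω (τ : Q → A → A × Q) (ξ : ℕ → A) : Set (ℕ → A) :=
  (fun f : Function.End (List A) => extω f ξ) '' (Sgp τ : Set (Function.End (List A)))

/-- `m_v = sup_{ξ ∈ A^ω} |S·(v⌢ξ)| ∈ ℕ ∪ {∞}`. -/
noncomputable def mval (τ : Q → A → A × Q) (v : List A) : ℕ∞ :=
  ⨆ ξ : ℕ → A, (orbitω τ (catω v ξ)).encard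

/-- The section `f@w` of an endomorphism of `A*` at the word `w`. -/
def sect (f : Function.End (List A)) (w : List A) : Function.End (List A) :=
  fun u => (f (w ++ u)).drop w.length

end Mealy
namespace Mealy

/-- length- and prefix-preserving -/
def Pres (f : Function.End (List A)) : Prop :=
  (∀ u : List A, (f u).length = u.length) ∧
  ∀ u v : List A, f (u ++ v) = f u ++ sect f u v

theorem act_length (τ : Q → A → A × Q) (q : Q) (u : List A) :
    (act τ q u).length = u.length := by
  induction u generalizing q with
  | nil => rfl
  | cons a u ih => simp [act, ih]

theorem pres_act (τ : Q → A → A × Q) (q : Q) : Pres (act τ q) := by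
  refine ⟨act_length τ q, fun u v => ?_⟩
  show act τ q (u ++ v) = act τ q u ++ (act τ q (u ++ v)).drop u.length
  induction u generalizing q with
  | nil => simp [act]
  | cons a u ih =>
    show (τ q a).1 :: act τ (τ q a).2 (u ++ v)
        = ((τ q a).1 :: act τ (τ q a).2 u) ++
          ((τ q a).1 :: act τ (τ q a).2 (u ++ v)).drop (u.length + 1)
    rw [List.drop_succ_cons, List.cons_append]
    exact congrArg _ (ih _)

theorem pres_one : Pres (1 : Function.End (List A)) := by
  refine ⟨fun u => rfl, fun u v => ?_⟩
  show u ++ v = u ++ ((u ++ v).drop u.length)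
  simp

theorem pres_mul {f g : Function.End (List A)} (hf : Pres f) (hg : Pres g) :
    Pres (f * g) := by
  refine ⟨fun u => by exact (hf.1 (g u)).trans (hg.1 u), fun u v => ?_⟩
  show f (g (u ++ v)) = f (g u) ++ ((f (g (u ++ v))).drop u.length)
  rw [hg.2 u v, hf.2 (g u) (sect g u v)]
  congr 1
  rw [List.drop_append_of_le_length (by rw [hf.1 (g u), hg.1 u])]
  simp [hf.1 (g u), hg.1 u]

theorem pres_sgp (τ : Q → A → A × Q) {f : Function.End (List A)} (hf : f ∈ Sgp τ) :
    Pres f := by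
  induction hf using Submonoid.closure_induction with
  | mem x hx => obtain ⟨q, rfl⟩ := hx; exact pres_act τ q
  | one => exact pres_one
  | mul x y hx hy px py => exact pres_mul px py

theorem length_of_mem_orbit (τ : Q → A → A × Q) {u v : List A} (h : u ∈ orbit τ v) :
    u.length = v.length := by
  obtain ⟨f, hf, rfl⟩ := h
  exact (pres_sgp τ hf).1 v

theorem catω_of_le (u : List A) (ξ : ℕ → A) {n : ℕ} (h : u.length ≤ n) :
    catω u ξ n = ξ (n - u.length) :=
  List.getD_eq_default _ _ h

theorem map_range_catω (u : List A) (ξ : ℕ → A) (m : ℕ) :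
    (List.range m).map (catω u ξ) = u.take m ++ (List.range (m - u.length)).map ξ := by
  induction m with
  | zero => simp
  | succ m ih =>
    rw [List.range_succ, List.map_append, ih]
    rcases lt_or_ge m u.length with h | h
    · have h1 : m + 1 - u.length = 0 := by omega
      have h2 : m - u.length = 0 := by omega
      simp only [h1, h2, List.range_zero, List.map_nil, List.append_nil]
      rw [List.take_succ]
      simp [catω, List.getD, List.getElem?_eq_getElem h]
    · have h1 : m + 1 - u.length = (m - u.length) + 1 := by omega
      rw [h1, List.range_succ, List.map_append,
        List.take_of_length_le (l := u) (Nat.le_succ_of_le h),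
        List.take_of_length_le (l := u) h, List.append_assoc]
      simp [catω_of_le _ _ h]

theorem map_range_catω_self (u : List A) (ξ : ℕ → A) :
    (List.range u.length).map (catω u ξ) = u := by
  simp [map_range_catω]

theorem catω_add (u : List A) (ξ : ℕ → A) (n : ℕ) :
    catω u ξ (n + u.length) = ξ n := by
  rw [catω_of_le _ _ (by omega), Nat.add_sub_cancel]

theorem catω_append (u v : List A) (ξ : ℕ → A) :
    catω (u ++ v) ξ = catω u (catω v ξ) := by
  funext n
  unfold catω
  rcases lt_or_ge n u.length with h | h
  · rw [List.getD_append _ _ _ _ h, List.getD_eq_getElem _ _ h,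
      List.getD_eq_getElem _ _ h]
  · rw [List.getD_append_right _ _ _ _ h, List.getD_eq_default _ _ h]
    simp [Nat.sub_sub, Nat.add_comm u.length v.length]

theorem extω_catω {f : Function.End (List A)} (hf : Pres f) (v : List A) (ξ : ℕ → A) :
    extω f (catω v ξ) = catω (f v) (extω (sect f v) ξ) := by
  funext n
  have hfv : (f v).length = v.length := hf.1 v
  show (f ((List.range (n + 1)).map (catω v ξ))).getD n (catω v ξ n)
      = (f v).getD n (extω (sect f v) ξ (n - (f v).length))
  rw [map_range_catω]
  rcases lt_or_ge n v.length with h | h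
  · have h1 : n + 1 - v.length = 0 := by omega
    simp only [h1, List.range_zero, List.map_nil, List.append_nil]
    have hv : v = v.take (n + 1) ++ v.drop (n + 1) := by simp
    have hlen : n < (f (v.take (n + 1))).length := by
      rw [hf.1]; simpa using by omega
    rw [List.getD_eq_getElem _ _ hlen]
    conv_rhs => rw [hv]
    rw [hf.2 (v.take (n+1)) (v.drop (n+1)),
      List.getD_append _ _ _ _ hlen, List.getD_eq_getElem _ _ hlen]
  · have h1 : n + 1 - v.length = (n - v.length) + 1 := by omega
    have hfn : (f v).length ≤ n := by omega
    rw [List.take_of_length_le (l := v) (by omega), h1, hf.2 v _,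
      List.getD_append_right _ _ _ _ hfn,
      List.getD_eq_default (f v) _ hfn, catω_of_le _ _ h, hfv]
    rfl

end Mealy

namespace Mealy

theorem cat_inj {A : Type*} (a b : List A) (s t : ℕ → A) (hl : a.length = b.length)
    (he : catω a s = catω b t) : a = b ∧ s = t := by
  have ha : a = b := by
    conv_lhs => rw [← map_range_catω_self a s]
    conv_rhs => rw [← map_range_catω_self b t]
    rw [hl, he]
  refine ⟨ha, funext fun n => ?_⟩
  have h2 := congrFun he (n + a.length)
  rwa [catω_add, hl, catω_add] at h2


/-- if there is a bijection `φ : S·v₁ → S·v₂` with `φ(v₁) = v₂` and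
`ψ_{v₁}^φ = ψ_{v₂}` (expressed componentwise: `φ` intertwines the restricted actions,
i.e. `φ(s·w) = s·(φ w)`, and the sections agree, i.e. `s@w = s@(φ w)`), then
`m_{v₁⌢w} = m_{v₂⌢w}` for all `w ∈ A*`. -/
theorem mval_append_eq_of_equiv {Q A : Type*} [Finite A] (τ : Q → A → A × Q)
    (v₁ v₂ : List A) (φ : ↥(orbit τ v₁) ≃ ↥(orbit τ v₂))
    (hv₁ : v₁ ∈ orbit τ v₁) (hφv : (φ ⟨v₁, hv₁⟩ : List A) = v₂)
    (hπ : ∀ f ∈ Sgp τ, ∀ (w : ↥(orbit τ v₁)) (h : f (w : List A) ∈ orbit τ v₁),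
      ((φ ⟨f (w : List A), h⟩ : List A)) = f ((φ w : List A)))
    (hsect : ∀ f ∈ Sgp τ, ∀ w : ↥(orbit τ v₁),
      sect f (w : List A) = sect f ((φ w : List A))) :
    ∀ w : List A, mval τ (v₁ ++ w) = mval τ (v₂ ++ w) := by
  classical
  intro w
  unfold mval
  refine iSup_congr fun ξ => ?_
  rw [catω_append v₁ w ξ, catω_append v₂ w ξ]
  set C := catω w ξ with hC
  set φf : List A → List A := fun u =>
    if h : u ∈ orbit τ v₁ then (φ ⟨u, h⟩ : List A) else u with hφf
  set Φ : (ℕ → A) → (ℕ → A) := fun η =>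
    catω (φf ((List.range v₁.length).map η)) (fun n => η (n + v₁.length)) with hΦ
  have hsect' : ∀ f ∈ Sgp τ, sect f v₁ = sect f v₂ := by
    intro f hf
    have h := hsect f hf ⟨v₁, hv₁⟩
    rw [hφv] at h
    exact h
  have hφ' : ∀ f ∈ Sgp τ, ∀ (h : f v₁ ∈ orbit τ v₁),
      (φ ⟨f v₁, h⟩ : List A) = f v₂ := by
    intro f hf h
    have h2 := hπ f hf ⟨v₁, hv₁⟩ h
    rw [hφv] at h2
    exact h2
  have key : ∀ f ∈ Sgp τ, Φ (extω f (catω v₁ C)) = extω f (catω v₂ C) := by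
    intro f hf
    have hp := pres_sgp τ hf
    have hmem : f v₁ ∈ orbit τ v₁ := ⟨f, hf, rfl⟩
    have h1 : extω f (catω v₁ C) = catω (f v₁) (extω (sect f v₁) C) :=
      extω_catω hp v₁ C
    have hlen : (f v₁).length = v₁.length := hp.1 v₁
    have hpre : (List.range v₁.length).map (extω f (catω v₁ C)) = f v₁ := by
      rw [h1, ← hlen, map_range_catω_self]
    have htail : (fun n => extω f (catω v₁ C) (n + v₁.length)) = extω (sect f v₁) C := by
      funext n; rw [h1, ← hlen, catω_add]
    have hφfv : φf (f v₁) = f v₂ := by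
      simp only [hφf, dif_pos hmem]
      exact hφ' f hf hmem
    calc Φ (extω f (catω v₁ C))
        = catω (φf ((List.range v₁.length).map (extω f (catω v₁ C))))
            (fun n => extω f (catω v₁ C) (n + v₁.length)) := rfl
      _ = catω (f v₂) (extω (sect f v₂) C) := by
          rw [hpre, htail, hφfv, hsect' f hf]
      _ = extω f (catω v₂ C) := (extω_catω hp v₂ C).symm
  have himg : orbitω τ (catω v₂ C) = Φ '' orbitω τ (catω v₁ C) := by
    unfold orbitω
    rw [Set.image_image]
    exact (Set.image_congr key).symm
  have hinj : Set.InjOn Φ (orbitω τ (catω v₁ C)) := by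
    rintro _ ⟨f₁, hf₁, rfl⟩ _ ⟨f₂, hf₂, rfl⟩ heq
    simp only at heq ⊢
    rw [key f₁ hf₁, key f₂ hf₂] at heq
    have hp₁ := pres_sgp τ hf₁
    have hp₂ := pres_sgp τ hf₂
    rw [extω_catω hp₁ v₂ C, extω_catω hp₂ v₂ C] at heq
    obtain ⟨he1, he2⟩ := cat_inj _ _ _ _ (by rw [hp₁.1, hp₂.1]) heq
    have hm₁ : f₁ v₁ ∈ orbit τ v₁ := ⟨f₁, hf₁, rfl⟩
    have hm₂ : f₂ v₁ ∈ orbit τ v₁ := ⟨f₂, hf₂, rfl⟩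
    have hvv : f₁ v₁ = f₂ v₁ := by
      have : (⟨f₁ v₁, hm₁⟩ : ↥(orbit τ v₁)) = ⟨f₂ v₁, hm₂⟩ :=
        φ.injective (Subtype.ext ((hφ' f₁ hf₁ hm₁).trans
          (he1.trans (hφ' f₂ hf₂ hm₂).symm)))
      exact congrArg Subtype.val this
    rw [extω_catω hp₁ v₁ C, extω_catω hp₂ v₁ C, hvv, hsect' f₁ hf₁, hsect' f₂ hf₂, he2]
  rw [himg, hinj.encard_image]


end Mealy
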